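/- Let n ≥ 1, k > 0, c > 0, δ > 0, let H be a symmetric positive definite real n×n matrix, θ* ∈ ℝⁿ, h₀ ∈ ℝ, and let h₁ ∈ ℝⁿ be nonzero. Define max_δ(x) := (x + √(x² + δ))/2 and h(θ) := h₀ + h₁ᵀ(θ − θ*). Suppose θ̃_r : [0,∞) → ℝⁿ is a differentiable solution of the ODE θ̃_r' = −k H θ̃_r + (h₁/‖h₁‖²) · max_δ(k θ̃_rᵀ H h₁ − c(h₀ + h₁ᵀθ̃_r)). Then h(θ̃_r(t) + θ*) ≥ h(θ̃_r(0) + θ*) e^{−ct} for all t ≥ 0; in particular the set {θ̃ ∈ ℝⁿ : h(θ̃ + θ*) ≥ 0} is forward invariant for this ODE. -/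

import Mathlib

noncomputable section
open Matrix

/-- The smooth max approximation `max_δ(x) = (x + √(x² + δ))/2`. -/
def maxDelta (δ x : ℝ) : ℝ := (x + Real.sqrt (x ^ 2 + δ)) / 2

/-- The linear barrier `h(θ) = h₀ + h₁ᵀ(θ−θ*)`. -/
def hfun (n : ℕ) (h₀ : ℝ) (h₁ : Fin n → ℝ) (θs : Fin n → ℝ) (θ : Fin n → ℝ) : ℝ :=
  h₀ + h₁ ⬝ᵥ (θ - θs)

/-- Right-hand side of the reduced model
`θ̃' = −kHθ̃ + (h₁/‖h₁‖²) max_δ(kθ̃ᵀHh₁ − c(h₀ + h₁ᵀθ̃))`. -/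
def reducedRHS (n : ℕ) (k c δ : ℝ) (H : Matrix (Fin n) (Fin n) ℝ) (h₀ : ℝ)
    (h₁ : Fin n → ℝ) (θ : Fin n → ℝ) : Fin n → ℝ :=
  (-k) • (H *ᵥ θ) +
    ((h₁ ⬝ᵥ h₁)⁻¹ * maxDelta δ (k * (θ ⬝ᵥ (H *ᵥ h₁)) - c * (h₀ + h₁ ⬝ᵥ θ))) • h₁


lemma maxDelta_ge {δ : ℝ} (hδ : 0 ≤ δ) (x : ℝ) : x ≤ maxDelta δ x := by
  have h1 : |x| ≤ Real.sqrt (x ^ 2 + δ) := by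
    rw [← Real.sqrt_sq_eq_abs]
    exact Real.sqrt_le_sqrt (by linarith)
  have h2 := le_abs_self x
  unfold maxDelta; linarith

/-- Safety of the reduced system: along any solution of the reduced model,
`h(θ̃_r(t) + θ*) ≥ h(θ̃_r(0) + θ*)e^{−ct}` for all `t ≥ 0`; in particular the safe
set `{θ̃ : h(θ̃ + θ*) ≥ 0}` is forward invariant. -/
theorem stmt9 (n : ℕ) (hn : 1 ≤ n) (k c δ : ℝ) (hk : 0 < k) (hc : 0 < c) (hδ : 0 < δ)
    (H : Matrix (Fin n) (Fin n) ℝ) (hH : H.PosDef)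
    (θs : Fin n → ℝ) (h₀ : ℝ) (h₁ : Fin n → ℝ) (hh₁ : h₁ ≠ 0)
    (θr : ℝ → (Fin n → ℝ))
    (hsol : ∀ t : ℝ, 0 ≤ t → HasDerivAt θr (reducedRHS n k c δ H h₀ h₁ (θr t)) t) :
    (∀ t : ℝ, 0 ≤ t →
      hfun n h₀ h₁ θs (θr t + θs) ≥ hfun n h₀ h₁ θs (θr 0 + θs) * Real.exp (-c * t)) ∧
    (0 ≤ hfun n h₀ h₁ θs (θr 0 + θs) →
      ∀ t : ℝ, 0 ≤ t → 0 ≤ hfun n h₀ h₁ θs (θr t + θs)) := by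
  have hsymm : Hᵀ = H := by simpa using hH.isHermitian.eq
  set φ : ℝ → ℝ := fun t => h₀ + h₁ ⬝ᵥ θr t with hφ
  have hfun_eq : ∀ t : ℝ, hfun n h₀ h₁ θs (θr t + θs) = φ t := by
    intro t; simp [hfun, hφ, add_sub_cancel_right]
  have hh1pos : 0 < h₁ ⬝ᵥ h₁ := by
    have hnn : 0 ≤ h₁ ⬝ᵥ h₁ := by
      unfold dotProduct; exact Finset.sum_nonneg fun i _ => mul_self_nonneg _
    rcases lt_or_eq_of_le hnn with h | h
    · exact h
    · exact absurd (dotProduct_self_eq_zero.mp h.symm) hh₁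
  -- derivative of φ
  have hφderiv : ∀ t : ℝ, 0 ≤ t →
      HasDerivAt φ (h₁ ⬝ᵥ reducedRHS n k c δ H h₀ h₁ (θr t)) t := by
    intro t ht
    have h := hasDerivAt_pi.mp (hsol t ht)
    have : HasDerivAt (fun s => h₀ + ∑ i, h₁ i * θr s i)
        (∑ i, h₁ i * reducedRHS n k c δ H h₀ h₁ (θr t) i) t := by
      exact (HasDerivAt.fun_sum (fun i _ => (h i).const_mul (h₁ i))).const_add h₀
    simpa [hφ, dotProduct] using this
  -- lower bound on the derivative
  have hlb : ∀ t : ℝ, 0 ≤ t →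
      -c * φ t ≤ h₁ ⬝ᵥ reducedRHS n k c δ H h₀ h₁ (θr t) := by
    intro t ht
    set θ := θr t
    have hAB : h₁ ⬝ᵥ (H *ᵥ θ) = θ ⬝ᵥ (H *ᵥ h₁) := by
      rw [Matrix.dotProduct_mulVec, dotProduct_comm, ← Matrix.mulVec_transpose, hsymm]
    have hM : k * (θ ⬝ᵥ (H *ᵥ h₁)) - c * (h₀ + h₁ ⬝ᵥ θ) ≤
        maxDelta δ (k * (θ ⬝ᵥ (H *ᵥ h₁)) - c * (h₀ + h₁ ⬝ᵥ θ)) := maxDelta_ge hδ.le _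
    have hexp : h₁ ⬝ᵥ reducedRHS n k c δ H h₀ h₁ θ =
        -k * (h₁ ⬝ᵥ (H *ᵥ θ)) +
          (h₁ ⬝ᵥ h₁)⁻¹ * maxDelta δ (k * (θ ⬝ᵥ (H *ᵥ h₁)) - c * (h₀ + h₁ ⬝ᵥ θ)) *
            (h₁ ⬝ᵥ h₁) := by
      simp [reducedRHS, dotProduct_add, dotProduct_smul, smul_eq_mul]
    rw [hexp, hAB]
    have : (h₁ ⬝ᵥ h₁)⁻¹ * maxDelta δ (k * (θ ⬝ᵥ (H *ᵥ h₁)) - c * (h₀ + h₁ ⬝ᵥ θ)) *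
        (h₁ ⬝ᵥ h₁) = maxDelta δ (k * (θ ⬝ᵥ (H *ᵥ h₁)) - c * (h₀ + h₁ ⬝ᵥ θ)) := by
      field_simp
    rw [this]
    simp only [hφ]
    linarith
  -- g := φ * exp(c t) is monotone on Ici 0
  set g : ℝ → ℝ := fun t => φ t * Real.exp (c * t) with hg
  have hgderiv : ∀ t : ℝ, 0 ≤ t → HasDerivAt g
      (h₁ ⬝ᵥ reducedRHS n k c δ H h₀ h₁ (θr t) * Real.exp (c * t) +
        φ t * (c * Real.exp (c * t))) t := by
    intro t ht
    have he : HasDerivAt (fun s => Real.exp (c * s)) (c * Real.exp (c * t)) t := by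
      have := (Real.hasDerivAt_exp (c * t)).comp t ((hasDerivAt_id t).const_mul c)
      simpa [mul_comm, Function.comp_def] using this
    exact (hφderiv t ht).mul he
  have hmono : MonotoneOn g (Set.Ici (0:ℝ)) := by
    apply monotoneOn_of_deriv_nonneg (convex_Ici 0)
    · intro t ht
      exact ((hgderiv t ht).continuousAt).continuousWithinAt
    · intro t ht
      rw [interior_Ici] at ht
      exact ((hgderiv t (le_of_lt ht)).differentiableAt).differentiableWithinAt
    · intro t ht
      rw [interior_Ici] at ht
      rw [(hgderiv t ht.le).deriv]
      have h1 := hlb t ht.le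
      have h2 : 0 < Real.exp (c * t) := Real.exp_pos _
      nlinarith
  have main : ∀ t : ℝ, 0 ≤ t → φ 0 * Real.exp (-c * t) ≤ φ t := by
    intro t ht
    have := hmono (Set.self_mem_Ici) ht ht
    have hg0 : g 0 = φ 0 := by simp [hg]
    rw [hg0] at this
    have h2 : 0 < Real.exp (c * t) := Real.exp_pos _
    have h3 : Real.exp (c * t) * Real.exp (-c * t) = 1 := by
      rw [← Real.exp_add]; simp
    have h4 : φ 0 ≤ φ t * Real.exp (c * t) := this
    calc φ 0 * Real.exp (-c * t) ≤ (φ t * Real.exp (c * t)) * Real.exp (-c * t) :=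
          mul_le_mul_of_nonneg_right h4 (Real.exp_pos (-c * t)).le
      _ = φ t := by rw [mul_assoc, h3, mul_one]
  constructor
  · intro t ht
    rw [hfun_eq, hfun_eq]
    exact main t ht
  · intro h0 t ht
    rw [hfun_eq] at *
    have := main t ht
    have := Real.exp_pos (-c * t)
    nlinarith
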